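/- Every necessary reason is the projection of a general necessary reason: a simple clause σ is a necessary reason for the decision on instance I in class Δ if and only if σ = I ⊓ σ' for some general necessary reason σ', where I ⊓ σ' is the disjunction of states appearing in both I and σ'. -/

import Mathlib

open scoped Classical

/-- Formulas over finite-domain variables: each variable `X : V` has domain `D X`.
A literal of `X` is (intended to be) a nonempty proper subset of `D X`'s states. -/
inductive Form (V : Type) (D : V → Type) : Type where
  | top : Form V D
  | bot : Form V D
  | lit : (X : V) → Set (D X) → Form V D
  | neg : Form V D → Form V D
  | and : Form V D → Form V D → Form V D
  | or : Form V D → Form V D → Form V D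

namespace Form

variable {V : Type} {D : V → Type}

/-- Satisfaction of a formula by a world. -/
def sat (w : ∀ X, D X) : Form V D → Prop
  | top => True
  | bot => False
  | lit X s => w X ∈ s
  | neg φ => ¬ sat w φ
  | and φ ψ => sat w φ ∧ sat w ψ
  | or φ ψ => sat w φ ∨ sat w ψ

/-- Conditioning `Δ|x` of a formula on state `x` of variable `X`: each `X`-literal
`ℓ` is replaced by `⊤` if `x ∈ ℓ` and by `⊥` otherwise. -/
noncomputable def cond (X : V) (x : D X) : Form V D → Form V D
  | top => top
  | bot => bot
  | lit Y s => if h : X = Y then (if h ▸ x ∈ s then top else bot) else lit Y s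
  | neg φ => neg (cond X x φ)
  | and φ ψ => and (cond X x φ) (cond X x ψ)
  | or φ ψ => or (cond X x φ) (cond X x ψ)

/-- The selection operator `⊓x·Δ := (Δ|x) ∧ Δ`. -/
noncomputable def sel (X : V) (x : D X) (Δ : Form V D) : Form V D :=
  and (cond X x Δ) Δ

/-- Logical equivalence of formulas (same models). -/
def equiv (φ ψ : Form V D) : Prop := ∀ w, sat w φ ↔ sat w ψ

/-- Variable `X` occurs (appears) in the formula. -/
def occurs (X : V) : Form V D → Prop
  | top => False
  | bot => False
  | lit Y _ => Y = X
  | neg φ => occurs X φ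
  | and φ ψ => occurs X φ ∨ occurs X ψ
  | or φ ψ => occurs X φ ∨ occurs X ψ

/-- NNF: negation-free, and every literal is a nonempty proper subset of states. -/
def isNNF : Form V D → Prop
  | top => True
  | bot => True
  | lit _ s => s.Nonempty ∧ s ≠ Set.univ
  | neg _ => False
  | and φ ψ => isNNF φ ∧ isNNF ψ
  | or φ ψ => isNNF φ ∧ isNNF ψ

/-- The `X`-literal `s` occurs in the formula. -/
def litOccurs (X : V) (s : Set (D X)) : Form V D → Prop
  | top => False
  | bot => False
  | lit Y t => ∃ h : Y = X, h ▸ t = s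
  | neg φ => litOccurs X s φ
  | and φ ψ => litOccurs X s φ ∨ litOccurs X s ψ
  | or φ ψ => litOccurs X s φ ∨ litOccurs X s ψ

/-- Every literal in the formula is implied by the instance `I`
(i.e., contains `I`'s state of its variable). -/
def litsImp (I : ∀ X, D X) : Form V D → Prop
  | top => True
  | bot => True
  | lit X s => I X ∈ s
  | neg φ => litsImp I φ
  | and φ ψ => litsImp I φ ∧ litsImp I ψ
  | or φ ψ => litsImp I φ ∧ litsImp I ψ

/-- Iterated selection `⊓` over a list of variables, using states from `v`. -/
noncomputable def selList (v : ∀ X, D X) : List V → Form V D → Form V D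
  | [], Δ => Δ
  | X :: L, Δ => sel X (v X) (selList v L Δ)

/-- The general reason `⊓I·Δ`: selection applied for all states of instance `I`. -/
noncomputable def selAll [Fintype V] (I : ∀ X, D X) (Δ : Form V D) : Form V D :=
  selList I (Finset.univ : Finset V).toList Δ

noncomputable def listAnd : List (Form V D) → Form V D
  | [] => top
  | φ :: L => and φ (listAnd L)

/-- Universal literal quantification `∀x·Δ := (Δ|x) ∧ ⋀_{y ≠ x} (x ∨ Δ|y)`. -/
noncomputable def uq (X : V) [Fintype (D X)] (x : D X) (Δ : Form V D) : Form V D :=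
  letI : DecidableEq (D X) := fun _ _ => Classical.propDecidable _
  and (cond X x Δ)
    (listAnd ((((Finset.univ : Finset (D X)).erase x).toList).map
      (fun y => or (lit X ({x} : Set (D X))) (cond X y Δ))))

/-- Iterated universal literal quantification over a list of variables. -/
noncomputable def uqList [∀ X, Fintype (D X)] (v : ∀ X, D X) : List V → Form V D → Form V D
  | [], Δ => Δ
  | X :: L, Δ => uq X (v X) (uqList v L Δ)

/-- The complete reason `∀I·Δ`. -/
noncomputable def uqAll [Fintype V] [∀ X, Fintype (D X)] (I : ∀ X, D X) (Δ : Form V D) :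
    Form V D :=
  uqList I (Finset.univ : Finset V).toList Δ

end Form

/-- A term: a conjunction of literals over distinct variables. Variable `X` is
mentioned iff `lits X ≠ univ`; each literal is nonempty (terms are consistent). -/
structure MvTerm (V : Type) (D : V → Type) : Type where
  lits : ∀ X, Set (D X)
  nonempty : ∀ X, (lits X).Nonempty

/-- A clause: a disjunction of literals over distinct variables. Variable `X` is
mentioned iff `lits X ≠ ∅`; each literal is proper (clauses are never valid). -/
structure MvClause (V : Type) (D : V → Type) : Type where
  lits : ∀ X, Set (D X)
  proper : ∀ X, lits X ≠ Set.univ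

namespace MvTerm

variable {V : Type} {D : V → Type}

def tsat (w : ∀ X, D X) (τ : MvTerm V D) : Prop := ∀ X, w X ∈ τ.lits X

def vars (τ : MvTerm V D) : Set V := {X | τ.lits X ≠ Set.univ}

/-- A simple term assigns a single state to each of its variables. -/
def simple (τ : MvTerm V D) : Prop :=
  ∀ X, τ.lits X ≠ Set.univ → ∃ x, τ.lits X = ({x} : Set (D X))

end MvTerm

namespace MvClause

variable {V : Type} {D : V → Type}

def csat (w : ∀ X, D X) (σ : MvClause V D) : Prop := ∃ X, w X ∈ σ.lits X

def vars (σ : MvClause V D) : Set V := {X | σ.lits X ≠ (∅ : Set (D X))}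

/-- A simple clause: all its literals are single states. -/
def simple (σ : MvClause V D) : Prop :=
  ∀ X, σ.lits X ≠ (∅ : Set (D X)) → ∃ x, σ.lits X = ({x} : Set (D X))

end MvClause

section PrimeDefs

variable {V : Type} {D : V → Type}

def termImp (τ τ' : MvTerm V D) : Prop := ∀ w, τ.tsat w → τ'.tsat w

def clauseImp (σ σ' : MvClause V D) : Prop := ∀ w, σ.csat w → σ'.csat w

/-- A prime implicant of the set of worlds `M`: a ⊨-maximal term implying `M`. -/
def isPrimeImplicantOf (M : (∀ X, D X) → Prop) (τ : MvTerm V D) : Prop :=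
  (∀ w, τ.tsat w → M w) ∧
  ∀ τ' : MvTerm V D, (∀ w, τ'.tsat w → M w) → termImp τ τ' → τ' = τ

/-- A prime implicate of the set of worlds `M`: a ⊨-minimal clause implied by `M`. -/
def isPrimeImplicateOf (M : (∀ X, D X) → Prop) (σ : MvClause V D) : Prop :=
  (∀ w, M w → σ.csat w) ∧
  ∀ σ' : MvClause V D, (∀ w, M w → σ'.csat w) → clauseImp σ' σ → σ' = σ

/-- Remove subsumed terms: delete any term strictly implied by another in the set. -/
def removeSubsumedT (S : Set (MvTerm V D)) : Set (MvTerm V D) :=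
  {τ ∈ S | ¬ ∃ τ' ∈ S, τ' ≠ τ ∧ termImp τ τ'}

/-- Remove subsumed clauses: delete any clause strictly implying another in the set. -/
def removeSubsumedC (S : Set (MvClause V D)) : Set (MvClause V D) :=
  {σ ∈ S | ¬ ∃ σ' ∈ S, σ' ≠ σ ∧ clauseImp σ' σ}

end PrimeDefs

section NecessaryReasons

variable {V : Type} {D : V → Type}

/-- `I ⊫ σ`: instance `I` implies every literal of clause `σ`. -/
def instEntailsC (I : ∀ X, D X) (σ : MvClause V D) : Prop :=
  ∀ X, σ.lits X ≠ (∅ : Set (D X)) → I X ∈ σ.lits X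

/-- `I ∖ σ`: the largest subterm of `I` that does not imply `σ` (the subterm of
`I` on the variables not mentioned by `σ`). -/
noncomputable def instMinus (I : ∀ X, D X) (σ : MvClause V D) : MvTerm V D where
  lits := fun X =>
    if σ.lits X = (∅ : Set (D X)) then ({I X} : Set (D X)) else Set.univ
  nonempty := by
    intro X
    try dsimp only
    split
    · exact ⟨I X, rfl⟩
    · exact ⟨I X, Set.mem_univ _⟩

/-- Conditions of a necessary reason (besides being strongest and simple):
`I ⊫ σ` and `(I ∖ σ) ∧ ¬σ ⊭ Δ`. -/
def nrCond (I : ∀ X, D X) (Δ : Form V D) (σ : MvClause V D) : Prop :=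
  instEntailsC I σ ∧
  ∃ w, MvTerm.tsat w (instMinus I σ) ∧ ¬ MvClause.csat w σ ∧ ¬ Form.sat w Δ

/-- A necessary reason: a strongest simple clause `σ` with `I ⊫ σ` and
`(I ∖ σ) ∧ ¬σ ⊭ Δ`. -/
def isNR (I : ∀ X, D X) (Δ : Form V D) (σ : MvClause V D) : Prop :=
  MvClause.simple σ ∧ nrCond I Δ σ ∧
  ∀ σ' : MvClause V D, MvClause.simple σ' → nrCond I Δ σ' →
    clauseImp σ' σ → σ' = σ

/-- Conditions of a general necessary reason: `I ⊫ σ` and `(I ∖ σ) ∧ ¬σ ⊨ ¬Δ`. -/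
def gnrCond (I : ∀ X, D X) (Δ : Form V D) (σ : MvClause V D) : Prop :=
  instEntailsC I σ ∧
  ∀ w, MvTerm.tsat w (instMinus I σ) → ¬ MvClause.csat w σ → ¬ Form.sat w Δ

/-- A strongest clause satisfying the general-necessary-reason conditions. -/
def strongestGNR (I : ∀ X, D X) (Δ : Form V D) (σ : MvClause V D) : Prop :=
  gnrCond I Δ σ ∧
  ∀ σ' : MvClause V D, gnrCond I Δ σ' → clauseImp σ' σ → σ' = σ

/-- A general necessary reason: a strongest clause with `I ⊫ σ` and
`(I ∖ σ) ∧ ¬σ ⊨ ¬Δ`, variable-minimal among such strongest clauses. -/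
def isGNR (I : ∀ X, D X) (Δ : Form V D) (σ : MvClause V D) : Prop :=
  strongestGNR I Δ σ ∧
  ¬ ∃ σ' : MvClause V D, strongestGNR I Δ σ' ∧ MvClause.vars σ' ⊂ MvClause.vars σ

/-- `I ⊓ σ'`: the disjunction of states appearing in both `I` and `σ'`. -/
def projClause (I : ∀ X, D X) (σ' : MvClause V D) : MvClause V D where
  lits := fun X => σ'.lits X ∩ ({I X} : Set (D X))
  proper := by
    intro X h
    apply σ'.proper X
    apply Set.eq_univ_of_univ_subset
    intro x hx
    have hx' : x ∈ σ'.lits X ∩ ({I X} : Set (D X)) := by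
      rw [show σ'.lits X ∩ ({I X} : Set (D X)) = Set.univ from h]; trivial
    exact hx'.1

end NecessaryReasons
section Aux

variable {V : Type} {D : V → Type}

lemma MvClause.ext' {σ τ : MvClause V D} (h : σ.lits = τ.lits) : σ = τ := by
  cases σ; cases τ; cases h; rfl

lemma occ_finite (φ : Form V D) : {X | Form.occurs X φ}.Finite := by
  induction φ with
  | top => exact Set.finite_empty.subset (fun X hX => hX)
  | bot => exact Set.finite_empty.subset (fun X hX => hX)
  | lit Y s =>
      refine (Set.finite_singleton Y).subset ?_
      intro X hX
      have : Y = X := hX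
      simp [this]
  | neg φ ih => exact ih
  | and φ ψ ih1 ih2 => exact (ih1.union ih2).subset (fun X hX => hX)
  | or φ ψ ih1 ih2 => exact (ih1.union ih2).subset (fun X hX => hX)

lemma sat_congr (φ : Form V D) {w w' : ∀ X, D X}
    (h : ∀ X, Form.occurs X φ → w X = w' X) : Form.sat w φ ↔ Form.sat w' φ := by
  induction φ with
  | top => exact Iff.rfl
  | bot => exact Iff.rfl
  | lit Y s =>
      have : w Y = w' Y := h Y rfl
      simp only [Form.sat, this]
  | neg φ ih => simp only [Form.sat]; rw [ih (fun X hX => h X hX)]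
  | and φ ψ ih1 ih2 =>
      simp only [Form.sat]
      rw [ih1 (fun X hX => h X (Or.inl hX)), ih2 (fun X hX => h X (Or.inr hX))]
  | or φ ψ ih1 ih2 =>
      simp only [Form.sat]
      rw [ih1 (fun X hX => h X (Or.inl hX)), ih2 (fun X hX => h X (Or.inr hX))]

/-- The key combinatorial condition `P S`. -/
def Pee (Δ : Form V D) (I : ∀ X, D X) (S : Set V) : Prop :=
  ∃ w : ∀ X, D X, (∀ X, X ∉ S → w X = I X) ∧ (∀ X ∈ S, w X ≠ I X) ∧ ¬ Form.sat w Δ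

lemma tsat_instMinus_iff {I w : ∀ X, D X} {σ : MvClause V D} :
    MvTerm.tsat w (instMinus I σ) ↔ ∀ X, σ.lits X = ∅ → w X = I X := by
  constructor
  · intro h X hX
    have h2 : w X ∈ (if σ.lits X = ∅ then ({I X} : Set (D X)) else Set.univ) := h X
    rw [if_pos hX] at h2
    exact h2
  · intro h X
    show w X ∈ (if σ.lits X = ∅ then ({I X} : Set (D X)) else Set.univ)
    split
    · exact Set.mem_singleton_iff.mpr (h X ‹_›)
    · trivial

lemma clauseImp_subset {σ' σ : MvClause V D} (h : clauseImp σ' σ) :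
    ∀ X, σ'.lits X ⊆ σ.lits X := by
  classical
  intro X x hx
  by_contra hns
  have hch : ∀ Y, ∃ y : D Y, y ∉ σ.lits Y :=
    fun Y => (Set.ne_univ_iff_exists_notMem _).mp (σ.proper Y)
  let w0 : ∀ Y, D Y := fun Y => Classical.choose (hch Y)
  let w : ∀ Y, D Y := Function.update w0 X x
  have hwX : w X = x := Function.update_self X x w0
  have hwY : ∀ Y, w Y ∉ σ.lits Y := by
    intro Y
    by_cases hXY : Y = X
    · subst hXY; rw [hwX]; exact hns
    · have h0 : w Y = w0 Y := Function.update_of_ne hXY x w0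
      rw [h0]
      exact Classical.choose_spec (hch Y)
  obtain ⟨Y, hY⟩ := h w ⟨X, by rw [hwX]; exact hx⟩
  exact hwY Y hY

lemma gnr_P {Δ : Form V D} {I : ∀ X, D X} {σ : MvClause V D} (h : gnrCond I Δ σ) :
    Pee Δ I (MvClause.vars σ) := by
  classical
  obtain ⟨hent, hmain⟩ := h
  have hch : ∀ Y, ∃ y : D Y, y ∉ σ.lits Y :=
    fun Y => (Set.ne_univ_iff_exists_notMem _).mp (σ.proper Y)
  let w : ∀ Y, D Y := fun Y => if σ.lits Y = ∅ then I Y else Classical.choose (hch Y)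
  have hni : ∀ Y, w Y ∉ σ.lits Y := by
    intro Y
    by_cases hY : σ.lits Y = ∅
    · simp [w, hY]
    · simpa [w, hY] using Classical.choose_spec (hch Y)
  have hoff : ∀ Y, σ.lits Y = ∅ → w Y = I Y := by
    intro Y hY; simp [w, hY]
  refine ⟨w, ?_, ?_, ?_⟩
  · intro X hX
    have : σ.lits X = ∅ := by
      by_contra hne; exact hX hne
    exact hoff X this
  · intro X hX heq
    have hne : σ.lits X ≠ ∅ := hX
    have : I X ∈ σ.lits X := hent X hne
    exact hni X (heq ▸ this)
  · refine hmain w (tsat_instMinus_iff.mpr hoff) ?_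
    rintro ⟨Y, hY⟩
    exact hni Y hY

lemma P_inter_occ {Δ : Form V D} {I : ∀ X, D X} {S : Set V} (h : Pee Δ I S) :
    Pee Δ I (S ∩ {X | Form.occurs X Δ}) := by
  classical
  obtain ⟨w, h1, h2, h3⟩ := h
  set w' : ∀ X, D X := fun X => if X ∈ S ∩ {X | Form.occurs X Δ} then w X else I X with hw'
  have hval : ∀ X, w' X = if X ∈ S ∩ {X | Form.occurs X Δ} then w X else I X := fun X => rfl
  refine ⟨w', ?_, ?_, ?_⟩
  · intro X hX
    rw [hval X, if_neg hX]
  · intro X hX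
    rw [hval X, if_pos hX]
    exact h2 X hX.1
  · intro hs
    apply h3
    rw [sat_congr Δ (w' := w') ?_]
    · exact hs
    · intro X hocc
      rw [hval X]
      by_cases hXS : X ∈ S
      · rw [if_pos ⟨hXS, hocc⟩]
      · rw [if_neg (fun hm => hXS hm.1), h1 X hXS]

end Aux

section ZornPart

variable {V : Type} {D : V → Type}

lemma exists_strongestGNR {Δ : Form V D} {I : ∀ X, D X} (S₀ : Set V)
    (hfin : S₀.Finite) (hP : Pee Δ I S₀) :
    ∃ σm : MvClause V D, strongestGNR I Δ σm ∧ MvClause.vars σm ⊆ S₀ := by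
  classical
  obtain ⟨w₀, hw₀I, hw₀S, hw₀Δ⟩ := hP
  -- decode a set of pairs into a family of literals
  let dL : Set (Σ X : V, D X) → ∀ X, Set (D X) := fun A X => {x | (⟨X, x⟩ : Σ X : V, D X) ∈ A}
  let Good : Set (Set (Σ X : V, D X)) := { A |
    (∀ X, dL A X ≠ Set.univ) ∧
    (∀ X, dL A X ≠ ∅ → I X ∈ dL A X) ∧
    (∀ X, X ∉ S₀ → dL A X = ∅) ∧
    (∀ w : ∀ X, D X, (∀ X, dL A X = ∅ → w X = I X) → (∀ X, w X ∉ dL A X) →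
      ¬ Form.sat w Δ) }
  let A₀ : Set (Σ X : V, D X) := { p | p.1 ∈ S₀ ∧ p.2 ≠ w₀ p.1 }
  have hdLA₀ : ∀ X, dL A₀ X = {x | X ∈ S₀ ∧ x ≠ w₀ X} := fun X => rfl
  have hA₀ : A₀ ∈ Good := by
    refine ⟨?_, ?_, ?_, ?_⟩
    · intro X h
      have : w₀ X ∈ dL A₀ X := h ▸ Set.mem_univ _
      rw [hdLA₀] at this
      exact this.2 rfl
    · intro X h
      obtain ⟨x, hx⟩ := Set.nonempty_iff_ne_empty.mpr h
      rw [hdLA₀] at hx ⊢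
      exact ⟨hx.1, fun heq => hw₀S X hx.1 heq.symm⟩
    · intro X hX
      rw [hdLA₀]
      ext x
      simp only [Set.mem_setOf_eq, Set.mem_empty_iff_false, iff_false]
      exact fun hc => hX hc.1
    · intro w h1 h2
      have hww : w = w₀ := by
        funext X
        by_cases hX : X ∈ S₀
        · have := h2 X
          rw [hdLA₀] at this
          by_contra hne
          exact this ⟨hX, hne⟩
        · have he : dL A₀ X = ∅ := by
            rw [hdLA₀]; ext x
            simp only [Set.mem_setOf_eq, Set.mem_empty_iff_false, iff_false]
            exact fun hc => hX hc.1
          rw [h1 X he, hw₀I X hX]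
      rw [hww]; exact hw₀Δ
  have Hchain : ∀ c ⊆ Good, IsChain (· ⊆ ·) c → c.Nonempty →
      ∃ lb ∈ Good, ∀ s ∈ c, lb ⊆ s := by
    intro c hcG hchain hne
    obtain ⟨B, hB⟩ := hne
    refine ⟨⋂₀ c, ?_, fun s hs => Set.sInter_subset_of_mem hs⟩
    have hsub : ∀ A ∈ c, ∀ X, dL (⋂₀ c) X ⊆ dL A X := by
      intro A hA X x hx
      exact (Set.mem_sInter.mp hx) A hA
    refine ⟨?_, ?_, ?_, ?_⟩
    · intro X h
      have : dL B X = Set.univ :=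
        Set.eq_univ_of_univ_subset (h ▸ hsub B hB X)
      exact (hcG hB).1 X this
    · intro X h
      obtain ⟨x, hx⟩ := Set.nonempty_iff_ne_empty.mpr h
      intro A hA
      have hxA : x ∈ dL A X := hsub A hA X hx
      have : dL A X ≠ ∅ := fun he => (he ▸ hxA : x ∈ (∅ : Set (D X)))
      exact (hcG hA).2.1 X this
    · intro X hX
      rw [← Set.subset_empty_iff]
      exact ((hcG hB).2.2.1 X hX) ▸ hsub B hB X
    · intro w hw1 hw2 hsat
      have hHne : ∀ A ∈ c, ∃ X, w X ∈ dL A X := by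
        intro A hA
        by_contra hno
        push_neg at hno
        refine (hcG hA).2.2.2 w ?_ hno hsat
        intro X hX
        refine hw1 X ?_
        rw [← Set.subset_empty_iff]
        exact hX ▸ hsub A hA X
      let H : Set (Σ X : V, D X) → Set V := fun A => {X | w X ∈ dL A X}
      have hHS : ∀ A ∈ c, H A ⊆ S₀ := by
        intro A hA X hX
        by_contra hXS
        have : w X ∈ (∅ : Set (D X)) := (hcG hA).2.2.1 X hXS ▸ hX
        exact this
      let N : Set ℕ := (fun A => (H A).ncard) '' c
      have hNne : N.Nonempty := ⟨_, ⟨B, hB, rfl⟩⟩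
      obtain ⟨A₁, hA₁c, hA₁card⟩ := Nat.sInf_mem hNne
      obtain ⟨X₁, hX₁⟩ := hHne A₁ hA₁c
      have hall : ∀ A ∈ c, w X₁ ∈ dL A X₁ := by
        intro A hA
        rcases hchain.total hA₁c hA with hAB | hBA
        · exact hAB hX₁
        · have hsubH : H A ⊆ H A₁ := fun X hX => hBA hX
          have hfinH : (H A₁).Finite := hfin.subset (hHS A₁ hA₁c)
          have hA₁card' : (H A₁).ncard = sInf N := hA₁card
          have hle : (H A₁).ncard ≤ (H A).ncard := by
            rw [hA₁card']
            exact Nat.sInf_le ⟨A, hA, rfl⟩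
          have heq : H A = H A₁ := Set.eq_of_subset_of_ncard_le hsubH hle hfinH
          have : X₁ ∈ H A := heq ▸ hX₁
          exact this
      exact hw2 X₁ (Set.mem_sInter.mpr (fun A hA => hall A hA))
  obtain ⟨m, hmA₀, hmin⟩ := zorn_superset_nonempty Good Hchain A₀ hA₀
  have hmG : m ∈ Good := hmin.prop
  let σm : MvClause V D := ⟨dL m, fun X => hmG.1 X⟩
  have hσmlits : ∀ X, σm.lits X = dL m X := fun X => rfl
  have hvars : MvClause.vars σm ⊆ S₀ := by
    intro X hX
    by_contra hXS
    exact (hX : σm.lits X ≠ ∅) (hmG.2.2.1 X hXS)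
  have hg : gnrCond I Δ σm := by
    refine ⟨fun X hX => hmG.2.1 X hX, ?_⟩
    intro w h1 h2
    refine hmG.2.2.2 w (tsat_instMinus_iff.mp h1) ?_
    intro X hx
    exact h2 ⟨X, hx⟩
  refine ⟨σm, ⟨hg, ?_⟩, hvars⟩
  intro σ₂ hg2 himp
  have hsubs := clauseImp_subset himp
  let A₂ : Set (Σ X : V, D X) := { p | p.2 ∈ σ₂.lits p.1 }
  have hdLA₂ : ∀ X, dL A₂ X = σ₂.lits X := fun X => rfl
  have hA₂G : A₂ ∈ Good := by
    refine ⟨?_, ?_, ?_, ?_⟩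
    · intro X; rw [hdLA₂]; exact σ₂.proper X
    · intro X hX; rw [hdLA₂] at hX ⊢; exact hg2.1 X hX
    · intro X hX
      rw [hdLA₂]
      ext x
      simp only [Set.mem_empty_iff_false, iff_false]
      intro hx
      have hx2 : x ∈ dL m X := hsubs X hx
      rw [hmG.2.2.1 X hX] at hx2
      exact hx2
    · intro w h1 h2
      refine hg2.2 w (tsat_instMinus_iff.mpr ?_) ?_
      · intro X hX; exact h1 X (by rw [hdLA₂]; exact hX)
      · rintro ⟨X, hX⟩; exact h2 X hX
  have hA₂m : A₂ ⊆ m := by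
    rintro ⟨X, x⟩ hx
    exact hsubs X hx
  have hmeq : A₂ = m := subset_antisymm hA₂m (hmin.2 hA₂G hA₂m)
  apply MvClause.ext'
  funext X
  rw [← hdLA₂ X, hmeq]

end ZornPart

section MainAux

variable {V : Type} {D : V → Type}

lemma nr_P {Δ : Form V D} {I : ∀ X, D X} {σ : MvClause V D}
    (hs : ∀ X, σ.lits X ≠ ∅ → σ.lits X = {I X}) (h : nrCond I Δ σ) :
    Pee Δ I (MvClause.vars σ) := by
  obtain ⟨hent, w, h1, h2, h3⟩ := h
  refine ⟨w, ?_, ?_, h3⟩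
  · intro X hX
    have hXe : σ.lits X = ∅ := by
      by_contra hne; exact hX hne
    exact tsat_instMinus_iff.mp h1 X hXe
  · intro X hX heq
    apply h2
    refine ⟨X, ?_⟩
    rw [hs X hX, heq]
    exact rfl

end MainAux

/-- a simple clause `σ` is a necessary reason for the decision on
instance `I` in class `Δ` iff `σ = I ⊓ σ'` for some general necessary reason `σ'`. -/
theorem nr_iff_projection_of_gnr {V : Type} {D : V → Type}
    (Δ : Form V D) (I : ∀ X, D X) (hI : Form.sat I Δ)
    (σ : MvClause V D) (hσ : MvClause.simple σ) :
    isNR I Δ σ ↔ ∃ σ' : MvClause V D, isGNR I Δ σ' ∧ σ = projClause I σ' := by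
  classical
  constructor
  · rintro ⟨hsimple, hnrc, hmax⟩
    have hent := hnrc.1
    have hlitsS : ∀ X, σ.lits X ≠ ∅ → σ.lits X = {I X} := by
      intro X hX
      obtain ⟨x, hx⟩ := hsimple X hX
      have hIx : I X ∈ σ.lits X := hent X hX
      rw [hx] at hIx ⊢
      rw [Set.mem_singleton_iff] at hIx
      rw [hIx]
    have hPS : Pee Δ I (MvClause.vars σ) := nr_P hlitsS hnrc
    have hmin : ∀ S' : Set V, S' ⊆ MvClause.vars σ → Pee Δ I S' →
        S' = MvClause.vars σ := by
      intro S' hsub hPS'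
      obtain ⟨w, h1, h2, h3⟩ := hPS'
      have hproper : ∀ X, (if X ∈ S' then ({I X} : Set (D X)) else ∅) ≠ Set.univ := by
        intro X
        split
        · next hX => rw [← hlitsS X (hsub hX)]; exact σ.proper X
        · intro h
          exact absurd (Set.eq_univ_iff_forall.mp h (I X)) (Set.notMem_empty _)
      set σ' : MvClause V D :=
        ⟨fun X => if X ∈ S' then ({I X} : Set (D X)) else ∅, hproper⟩ with hσ'def
      have hl : ∀ X, σ'.lits X = if X ∈ S' then ({I X} : Set (D X)) else ∅ :=
        fun X => rfl
      have hmem : ∀ X, σ'.lits X ≠ ∅ ↔ X ∈ S' := by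
        intro X
        rw [hl]
        by_cases hX : X ∈ S'
        · simp [hX]
        · simp [hX]
      have heq : σ' = σ := by
        apply hmax σ' ?_ ?_ ?_
        · intro X hX
          exact ⟨I X, by rw [hl, if_pos ((hmem X).mp hX)]⟩
        · refine ⟨?_, w, ?_, ?_, h3⟩
          · intro X hX
            rw [hl, if_pos ((hmem X).mp hX)]
            exact rfl
          · refine tsat_instMinus_iff.mpr ?_
            intro X hX
            exact h1 X (fun hXS => ((hmem X).mpr hXS) hX)
          · rintro ⟨X, hX⟩
            rw [hl] at hX
            by_cases hXS : X ∈ S'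
            · rw [if_pos hXS] at hX
              exact h2 X hXS hX
            · rw [if_neg hXS] at hX
              exact hX
        · rintro v ⟨X, hX⟩
          rw [hl] at hX
          by_cases hXS : X ∈ S'
          · rw [if_pos hXS] at hX
            refine ⟨X, ?_⟩
            rw [hlitsS X (hsub hXS)]
            exact hX
          · rw [if_neg hXS] at hX
            exact absurd hX (Set.notMem_empty _)
      ext X
      constructor
      · intro hX
        exact hsub hX
      · intro hX
        refine (hmem X).mp ?_
        rw [heq]
        exact hX
    have hocc : MvClause.vars σ ⊆ {X | Form.occurs X Δ} := by
      have h2 := P_inter_occ hPS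
      have h3 := hmin _ Set.inter_subset_left h2
      intro X hX
      rw [← h3] at hX
      exact hX.2
    have hfinS : (MvClause.vars σ).Finite := (occ_finite Δ).subset hocc
    obtain ⟨σm, hsm, hvsub⟩ := exists_strongestGNR _ hfinS hPS
    have hveq : MvClause.vars σm = MvClause.vars σ := hmin _ hvsub (gnr_P hsm.1)
    refine ⟨σm, ⟨hsm, ?_⟩, ?_⟩
    · rintro ⟨σ'', hs'', hss⟩
      have h4 : MvClause.vars σ'' = MvClause.vars σ :=
        hmin _ (hss.subset.trans hveq.subset) (gnr_P hs''.1)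
      exact hss.ne (h4.trans hveq.symm)
    · apply MvClause.ext'
      funext X
      show σ.lits X = σm.lits X ∩ {I X}
      by_cases hX : σ.lits X = ∅
      · have hX' : σm.lits X = ∅ := by
          by_contra hne
          have hXm : X ∈ MvClause.vars σm := hne
          rw [hveq] at hXm
          exact hXm hX
        rw [hX, hX', Set.empty_inter]
      · have hXv : X ∈ MvClause.vars σm := by rw [hveq]; exact hX
        have hIm : I X ∈ σm.lits X := hsm.1.1 X hXv
        rw [hlitsS X hX]
        exact (Set.inter_eq_self_of_subset_right
          (Set.singleton_subset_iff.mpr hIm)).symm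
  · rintro ⟨σ', ⟨hstrong, hminvar⟩, rfl⟩
    have hent' := hstrong.1.1
    have hproj : ∀ X, (projClause I σ').lits X =
        if σ'.lits X = ∅ then (∅ : Set (D X)) else {I X} := by
      intro X
      show σ'.lits X ∩ {I X} = _
      by_cases hX : σ'.lits X = ∅
      · rw [if_pos hX, hX, Set.empty_inter]
      · rw [if_neg hX]
        exact Set.inter_eq_self_of_subset_right
          (Set.singleton_subset_iff.mpr (hent' X hX))
    have hPT : Pee Δ I (MvClause.vars σ') := gnr_P hstrong.1
    have hprojlits : ∀ X, (projClause I σ').lits X ≠ ∅ →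
        (projClause I σ').lits X = {I X} ∧ σ'.lits X ≠ ∅ := by
      intro X hX
      rw [hproj X] at hX ⊢
      by_cases hT : σ'.lits X = ∅
      · rw [if_pos hT] at hX
        exact absurd rfl hX
      · rw [if_neg hT]
        exact ⟨rfl, hT⟩
    refine ⟨hσ, ⟨?_, ?_⟩, ?_⟩
    · intro X hX
      rw [(hprojlits X hX).1]
      exact rfl
    · obtain ⟨w, h1, h2, h3⟩ := hPT
      refine ⟨w, tsat_instMinus_iff.mpr ?_, ?_, h3⟩
      · intro X hX
        rw [hproj X] at hX
        by_cases hT : σ'.lits X = ∅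
        · exact h1 X (fun hv => hv hT)
        · rw [if_neg hT] at hX
          exact absurd hX (Set.singleton_ne_empty _)
      · rintro ⟨X, hX⟩
        rw [hproj X] at hX
        by_cases hT : σ'.lits X = ∅
        · rw [if_pos hT] at hX
          exact hX
        · rw [if_neg hT] at hX
          exact h2 X hT hX
    · intro σ'' hsimp'' hnr'' himp''
      have hsubs := clauseImp_subset himp''
      have hlit'' : ∀ X, σ''.lits X ≠ ∅ → σ''.lits X = {I X} ∧ σ'.lits X ≠ ∅ := by
        intro X hX
        have hsub := hsubs X
        rw [hproj X] at hsub
        by_cases hT : σ'.lits X = ∅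
        · rw [if_pos hT] at hsub
          exact absurd (Set.subset_empty_iff.mp hsub) hX
        · rw [if_neg hT] at hsub
          obtain ⟨x, hx⟩ := hsimp'' X hX
          rw [hx] at hsub
          have hxI : x = I X := hsub rfl
          exact ⟨by rw [hx, hxI], hT⟩
      have hPS'' : Pee Δ I (MvClause.vars σ'') :=
        nr_P (fun X hX => (hlit'' X hX).1) hnr''
      have hsubT : MvClause.vars σ'' ⊆ MvClause.vars σ' :=
        fun X hX => (hlit'' X hX).2
      have hTeq : MvClause.vars σ'' = MvClause.vars σ' := by
        by_contra hne
        obtain ⟨σm, hsm, hv⟩ := exists_strongestGNR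
          (MvClause.vars σ'' ∩ {X | Form.occurs X Δ})
          ((occ_finite Δ).subset Set.inter_subset_right) (P_inter_occ hPS'')
        apply hminvar
        refine ⟨σm, hsm, ?_⟩
        exact Set.ssubset_of_subset_of_ssubset (hv.trans Set.inter_subset_left)
          (hsubT.ssubset_of_ne hne)
      apply MvClause.ext'
      funext X
      by_cases hX : σ''.lits X = ∅
      · have hT : σ'.lits X = ∅ := by
          by_contra hT
          have hXm : X ∈ MvClause.vars σ'' := by rw [hTeq]; exact hT
          exact (hXm : σ''.lits X ≠ ∅) hX
        rw [hX, hproj X, if_pos hT]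
      · have h5 := hlit'' X hX
        rw [h5.1, hproj X, if_neg h5.2]
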